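/- arXiv:2506.19015 — 3 statements merged into one kernel-verified Lean document; each statement's English description precedes it below -/
import Mathlib

section
/- Normalization of the Dirichlet-process partition law: for every real number α and every finite set s with |s| = n, ∑_{P partition of s} α^{#P} · ∏_{B ∈ P} (|B| − 1)! = ∏_{i=0}^{n−1} (α + i), the ascending factorial α(α+1)⋯(α+n−1) (for n = 0 both sides equal 1). This identity expresses that Antoniak's Dirichlet-process-induced random partition law p(𝒫_n) = (Γ(α)/Γ(α+n)) · α^{M_n} · ∏_{j=1}^{M_n} Γ(n_j), used in the proof of the paper's Proposition 1, is a probability distribution over partitions of n items. -/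
open Finset

namespace DPAux

variable {α : Type*} [DecidableEq α] {s : Finset α} {x : α}

/-- Adds `x` to the block `o` of `P` (or as a new singleton when `o = ∅`). -/
def up (hx : x ∉ s) (P : Finpartition s) (o : Finset α) (ho : o = ∅ ∨ o ∈ P.parts) :
    Finpartition (insert x s) where
  parts := insert (insert x o) (P.parts.erase o)
  supIndep := by
    rw [Finset.supIndep_iff_pairwiseDisjoint]
    have hxC : ∀ C ∈ P.parts, x ∉ C := fun C hC h => hx (P.le hC h)
    intro u hu v hv huv
    simp only [coe_insert, Set.mem_insert_iff, mem_coe, Finset.mem_erase] at hu hv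
    rcases hu with rfl | ⟨hun, hup⟩ <;> rcases hv with rfl | ⟨hvn, hvp⟩
    · exact absurd rfl huv
    · simp only [Function.onFun, id]
      rw [Finset.disjoint_insert_left]
      refine ⟨hxC _ hvp, ?_⟩
      rcases ho with rfl | ho
      · exact Finset.disjoint_empty_left _
      · exact P.disjoint ho hvp (Ne.symm hvn)
    · simp only [Function.onFun, id]
      rw [Finset.disjoint_insert_right]
      refine ⟨hxC _ hup, ?_⟩
      rcases ho with rfl | ho
      · exact Finset.disjoint_empty_right _
      · exact P.disjoint hup ho hun
    · exact P.disjoint hup hvp huv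
  sup_parts := by
    rw [Finset.sup_insert, id]
    rcases ho with rfl | ho
    · rw [Finset.erase_eq_of_notMem (by exact_mod_cast P.bot_notMem), P.sup_parts,
        sup_eq_union, insert_union, empty_union]
    · have : o ⊔ (P.parts.erase o).sup id = s := by
        have h2 := Finset.sup_insert (b := o) (s := P.parts.erase o)
          (f := (id : Finset α → Finset α))
        rw [Finset.insert_erase ho, P.sup_parts] at h2
        exact h2.symm
      rw [sup_eq_union] at this ⊢
      rw [insert_union, this]
  bot_notMem := by
    simp only [bot_eq_empty, Finset.mem_insert, Finset.mem_erase, not_or]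
    exact ⟨fun h => (insert_ne_empty _ _) h.symm, fun h => P.bot_notMem h.2⟩

end DPAux

namespace DPAux

variable {α : Type*} [DecidableEq α] {s : Finset α} {x : α}

lemma up_parts (hx : x ∉ s) (P : Finpartition s) (o : Finset α) (ho : o = ∅ ∨ o ∈ P.parts) :
    (up hx P o ho).parts = insert (insert x o) (P.parts.erase o) := rfl

/-- Restricting a partition of `insert x s` to `s`. -/
def down (hx : x ∉ s) (Q : Finpartition (insert x s)) : Finpartition s :=
  (Q.avoid {x}).copy (by rw [Finset.sdiff_singleton_eq_erase, Finset.erase_insert hx])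

lemma mem_down (hx : x ∉ s) (Q : Finpartition (insert x s)) {c : Finset α} :
    c ∈ (down hx Q).parts ↔ ∃ d ∈ Q.parts, ¬ d ⊆ {x} ∧ d \ {x} = c := by
  simp [down, Finpartition.mem_avoid]

lemma part_x_mem (Q : Finpartition (insert x s)) : Q.part x ∈ Q.parts :=
  Q.part_mem.2 (mem_insert_self x s)

lemma x_mem_part (Q : Finpartition (insert x s)) : x ∈ Q.part x :=
  Q.mem_part (mem_insert_self x s)

lemma x_not_mem (Q : Finpartition (insert x s)) {d : Finset α} (hd : d ∈ Q.parts)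
    (hne : d ≠ Q.part x) : x ∉ d := fun h => hne (Q.part_eq_of_mem hd h).symm

end DPAux

namespace DPAux

variable {α : Type*} [DecidableEq α] {s : Finset α} {x : α}

lemma not_mem_of_mem_parts (hx : x ∉ s) (P : Finpartition s) {c : Finset α}
    (hc : c ∈ P.parts) : x ∉ c := fun h => hx (P.le hc h)

lemma not_mem_choice (hx : x ∉ s) (P : Finpartition s) {o : Finset α}
    (ho : o = ∅ ∨ o ∈ P.parts) : x ∉ o := by
  rcases ho with rfl | ho
  · exact Finset.notMem_empty x
  · exact not_mem_of_mem_parts hx P ho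

lemma choice_mem (hx : x ∉ s) (Q : Finpartition (insert x s)) :
    (Q.part x).erase x ∈ insert ∅ (down hx Q).parts := by
  by_cases h : (Q.part x).erase x = ∅
  · simp [h]
  · refine Finset.mem_insert_of_mem ((mem_down hx Q).2 ⟨Q.part x, part_x_mem Q, ?_, ?_⟩)
    · intro hsub
      obtain ⟨y, hy⟩ := Finset.nonempty_iff_ne_empty.2 h
      obtain ⟨hy1, hy2⟩ := Finset.mem_erase.1 hy
      exact hy1 (Finset.mem_singleton.1 (hsub hy2))
    · rw [Finset.sdiff_singleton_eq_erase]

lemma down_erase (hx : x ∉ s) (Q : Finpartition (insert x s)) :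
    (down hx Q).parts.erase ((Q.part x).erase x) = Q.parts.erase (Q.part x) := by
  ext c
  simp only [Finset.mem_erase, mem_down]
  constructor
  · rintro ⟨hco, d, hd, hsub, rfl⟩
    rcases eq_or_ne d (Q.part x) with rfl | hne
    · exact absurd (Finset.sdiff_singleton_eq_erase x (Q.part x)) hco
    · have hxd : x ∉ d := x_not_mem Q hd hne
      rw [Finset.sdiff_singleton_eq_erase, Finset.erase_eq_of_notMem hxd]
      exact ⟨hne, hd⟩
  · rintro ⟨hne, hc⟩
    have hxc : x ∉ c := x_not_mem Q hc hne
    have hcne : c.Nonempty := Q.nonempty_of_mem_parts hc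
    obtain ⟨y, hy⟩ := hcne
    refine ⟨?_, c, hc, ?_, ?_⟩
    · rintro rfl
      have hdisj := Q.disjoint hc (part_x_mem Q) hne
      exact Finset.disjoint_left.1 hdisj hy (Finset.erase_subset _ _ hy)
    · intro hsub
      exact hxc (Finset.mem_singleton.1 (hsub hy) ▸ hy)
    · rw [Finset.sdiff_singleton_eq_erase, Finset.erase_eq_of_notMem hxc]

lemma up_down (hx : x ∉ s) (Q : Finpartition (insert x s)) :
    up hx (down hx Q) ((Q.part x).erase x)
      (Finset.mem_insert.1 (choice_mem hx Q)) = Q := by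
  apply Finpartition.ext
  rw [up_parts, down_erase, Finset.insert_erase (x_mem_part Q),
    Finset.insert_erase (part_x_mem Q)]

lemma down_up (hx : x ∉ s) (P : Finpartition s) (o : Finset α)
    (ho : o = ∅ ∨ o ∈ P.parts) : down hx (up hx P o ho) = P := by
  have hxo : x ∉ o := not_mem_choice hx P ho
  apply Finpartition.ext
  ext c
  rw [mem_down]
  constructor
  · rintro ⟨d, hd, hsub, rfl⟩
    rw [up_parts, Finset.mem_insert] at hd
    rcases hd with rfl | hd
    · rcases ho with rfl | ho
      · exact absurd (by simp) hsub
      · rwa [Finset.sdiff_singleton_eq_erase, Finset.erase_insert hxo]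
    · obtain ⟨hdo, hd⟩ := Finset.mem_erase.1 hd
      have hxd : x ∉ d := not_mem_of_mem_parts hx P hd
      rwa [Finset.sdiff_singleton_eq_erase, Finset.erase_eq_of_notMem hxd]
  · intro hc
    have hxc : x ∉ c := not_mem_of_mem_parts hx P hc
    obtain ⟨y, hy⟩ := P.nonempty_of_mem_parts hc
    rcases eq_or_ne c o with rfl | hne
    · refine ⟨insert x c, by rw [up_parts]; exact Finset.mem_insert_self _ _, ?_, ?_⟩
      · intro hsub
        exact hxc (Finset.mem_singleton.1 (hsub (Finset.mem_insert_of_mem hy)) ▸ hy)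
      · rw [Finset.sdiff_singleton_eq_erase, Finset.erase_insert hxc]
    · refine ⟨c, by rw [up_parts]; exact Finset.mem_insert_of_mem (Finset.mem_erase.2 ⟨hne, hc⟩),
        ?_, ?_⟩
      · intro hsub
        exact hxc (Finset.mem_singleton.1 (hsub hy) ▸ hy)
      · rw [Finset.sdiff_singleton_eq_erase, Finset.erase_eq_of_notMem hxc]

lemma part_up (hx : x ∉ s) (P : Finpartition s) (o : Finset α)
    (ho : o = ∅ ∨ o ∈ P.parts) : (up hx P o ho).part x = insert x o :=
  Finpartition.part_eq_of_mem _ (Finset.mem_insert_self _ _) (Finset.mem_insert_self _ _)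

lemma choice_up (hx : x ∉ s) (P : Finpartition s) (o : Finset α)
    (ho : o = ∅ ∨ o ∈ P.parts) : ((up hx P o ho).part x).erase x = o := by
  rw [part_up, Finset.erase_insert (not_mem_choice hx P ho)]

end DPAux

namespace DPAux

variable {α : Type*} [DecidableEq α] {s : Finset α} {x : α}

lemma weight_up (a : ℝ) (hx : x ∉ s) (P : Finpartition s) (o : Finset α)
    (ho : o = ∅ ∨ o ∈ P.parts) :
    a ^ (up hx P o ho).parts.card *
        ∏ B ∈ (up hx P o ho).parts, ((B.card - 1).factorial : ℝ)
      = (if o = ∅ then a else (o.card : ℝ)) *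
        (a ^ P.parts.card * ∏ B ∈ P.parts, ((B.card - 1).factorial : ℝ)) := by
  have hnm : insert x o ∉ P.parts.erase o :=
    fun h => not_mem_of_mem_parts hx P (Finset.mem_of_mem_erase h) (Finset.mem_insert_self x o)
  have hxo : x ∉ o := not_mem_choice hx P ho
  rw [up_parts, Finset.card_insert_of_notMem hnm, Finset.prod_insert hnm]
  by_cases h : o = ∅
  · subst h
    rw [if_pos rfl, Finset.erase_eq_of_notMem (by exact_mod_cast P.bot_notMem)]
    simp [pow_succ]
    ring
  · have ho' : o ∈ P.parts := ho.resolve_left h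
    have hc : 0 < o.card := Finset.card_pos.2 (Finset.nonempty_iff_ne_empty.2 h)
    have hcard : (P.parts.erase o).card + 1 = P.parts.card := by
      rw [Finset.card_erase_of_mem ho']
      exact Nat.succ_pred_eq_of_pos (Finset.card_pos.2 ⟨o, ho'⟩)
    rw [if_neg h, hcard, Finset.card_insert_of_notMem hxo, Nat.add_sub_cancel,
      ← Finset.mul_prod_erase P.parts _ ho', ← Nat.mul_factorial_pred hc.ne']
    push_cast
    ring

lemma step (a : ℝ) (hx : x ∉ s) :
    ∑ Q : Finpartition (insert x s),
        a ^ Q.parts.card * ∏ B ∈ Q.parts, ((B.card - 1).factorial : ℝ)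
      = (a + s.card) *
        ∑ P : Finpartition s,
          a ^ P.parts.card * ∏ B ∈ P.parts, ((B.card - 1).factorial : ℝ) := by
  classical
  have main : ∑ Q : Finpartition (insert x s),
        a ^ Q.parts.card * ∏ B ∈ Q.parts, ((B.card - 1).factorial : ℝ)
      = ∑ p ∈ (Finset.univ : Finset (Finpartition s)).sigma (fun P => insert ∅ P.parts),
          (if p.2 = ∅ then a else (p.2.card : ℝ)) *
            (a ^ p.1.parts.card * ∏ B ∈ p.1.parts, ((B.card - 1).factorial : ℝ)) := by
    refine Finset.sum_bij'
      (fun Q _ => (⟨down hx Q, (Q.part x).erase x⟩ : Σ _ : Finpartition s, Finset α))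
      (fun p hp => up hx p.1 p.2 (Finset.mem_insert.1 ((Finset.mem_sigma.1 hp).2)))
      (fun Q _ => Finset.mem_sigma.2 ⟨Finset.mem_univ _, choice_mem hx Q⟩)
      (fun p hp => Finset.mem_univ _)
      (fun Q _ => up_down hx Q)
      (fun p hp => ?_) (fun Q _ => ?_)
    · rcases p with ⟨P, o⟩
      have ho := Finset.mem_insert.1 ((Finset.mem_sigma.1 hp).2)
      simp only [choice_up hx P o ho, down_up hx P o ho]
    · conv_lhs => rw [← up_down hx Q]
      exact weight_up a hx (down hx Q) _ _
  rw [main, Finset.sum_sigma, Finset.mul_sum]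
  refine Finset.sum_congr rfl fun P _ => ?_
  rw [Finset.sum_insert (by exact_mod_cast P.bot_notMem), if_pos rfl]
  have h2 : ∀ o ∈ P.parts,
      (if o = ∅ then a else (o.card : ℝ)) *
          (a ^ P.parts.card * ∏ B ∈ P.parts, ((B.card - 1).factorial : ℝ))
        = (o.card : ℝ) *
          (a ^ P.parts.card * ∏ B ∈ P.parts, ((B.card - 1).factorial : ℝ)) := by
    intro o ho
    rw [if_neg (Finset.nonempty_iff_ne_empty.1 (P.nonempty_of_mem_parts ho))]
  rw [Finset.sum_congr rfl h2, ← Finset.sum_mul]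
  have h3 : ∑ o ∈ P.parts, (o.card : ℝ) = (s.card : ℝ) := by
    rw [← P.sum_card_parts]; push_cast; ring
  rw [h3]
  ring

end DPAux


/-- **Normalization of the Dirichlet-process partition law (Antoniak).**
For every real `a` and every finite set `s` with `n` elements,
`∑_{P partition of s} a^{#P} · ∏_{B ∈ P} (|B| − 1)! = a(a+1)⋯(a+n−1)`,
the ascending factorial (for `n = 0` both sides equal `1`).  This expresses that the
Dirichlet-process-induced random partition law
`p(𝒫_n) = (Γ(a)/Γ(a+n)) · a^{M_n} · ∏_j Γ(n_j)`, used in the proof of Proposition 1,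
is a probability distribution over partitions of `n` items. -/
theorem dp_partition_normalization
    {α : Type*} [DecidableEq α]
    (a : ℝ) (s : Finset α) (n : ℕ) (hn : s.card = n) :
    ∑ P : Finpartition s,
        a ^ P.parts.card * ∏ B ∈ P.parts, ((B.card - 1).factorial : ℝ) =
      ∏ i ∈ Finset.range n, (a + i) := by
  subst hn
  classical
  induction s using Finset.induction_on with
  | empty =>
      have h1 : ∀ P : Finpartition (∅ : Finset α), P.parts = ∅ := fun P =>
        Finset.eq_empty_of_forall_notMem fun c hc =>
          (P.nonempty_of_mem_parts hc).ne_empty (Finset.subset_empty.1 (P.le hc))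
      haveI : Subsingleton (Finpartition (∅ : Finset α)) :=
        ⟨fun P Q => Finpartition.ext (by rw [h1, h1])⟩
      rw [Fintype.sum_subsingleton _ (⊥ : Finpartition (∅ : Finset α))]
      simp [h1]
  | @insert x t hx ih =>
      rw [DPAux.step a hx, ih, Finset.card_insert_of_notMem hx, Finset.prod_range_succ]
      ring
end

section
/- Normalization of the enriched-Dirichlet-process nested partition law: for all real numbers α > 0 and β > 0 and every finite set s with |s| = n, ∑_{P partition of s} α^{#P} · ∏_{B ∈ P} [ (|B| − 1)! · ( ∏_{i=0}^{|B|−1} (β + i) )^{−1} · ∑_{Q partition of B} β^{#Q} · ∏_{C ∈ Q} (|C| − 1)! ] = ∏_{i=0}^{n−1} (α + i). Equivalently, the nested random-partition prior induced by the enriched Dirichlet process derived in the proof of the paper's Proposition 1, p(𝒫_n) = (Γ(α)/Γ(α+n)) α^{M_n} ∏_{j=1}^{M_n} [ β^{M_{n,j}} · (Γ(β)Γ(n_j)/Γ(β+n_j)) · ∏_{l=1}^{M_{n,j}} Γ(n_{l∣j}) ] with constant lower-level concentration α_θ(φ) = β, sums to 1 over all nested partitions (a partition into φ-clusters together with a sub-partition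 of each φ-cluster into θ-subclusters) of n items. -/
open Finset

namespace EDPAux

variable {α : Type*} [DecidableEq α] {s : Finset α} {x : α}

/-- Add `x` to an existing block `B` of a partition of `s`. -/
def glueSome (hx : x ∉ s) (P : Finpartition s) (B : Finset α) (hB : B ∈ P.parts) :
    Finpartition (insert x s) where
  parts := insert (insert x B) (P.parts.erase B)
  supIndep := by
    rw [Finset.supIndep_iff_pairwiseDisjoint, coe_insert]
    refine (P.disjoint.subset ?_).insert ?_
    · exact_mod_cast Finset.erase_subset _ _
    · intro C hC hne
      simp only [mem_coe, mem_erase] at hC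
      simp only [id]
      rw [Finset.disjoint_insert_left]
      exact ⟨fun hxC => hx (P.le hC.2 hxC), P.disjoint hB hC.2 (Ne.symm hC.1)⟩
  sup_parts := by
    have h1 : (insert B (P.parts.erase B)).sup id = s := by
      rw [Finset.insert_erase hB]; exact P.sup_parts
    rw [Finset.sup_insert] at h1 ⊢
    simp only [id] at h1 ⊢
    rw [Finset.sup_eq_union] at h1 ⊢
    rw [Finset.insert_union, h1]
  bot_notMem := by
    simp only [Finset.bot_eq_empty, mem_insert, not_or]
    refine ⟨(Finset.insert_nonempty _ _).ne_empty.symm, fun h => ?_⟩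
    exact P.bot_notMem (Finset.erase_subset _ _ h)

theorem glueSome_parts (hx : x ∉ s) (P : Finpartition s) (B : Finset α) (hB : B ∈ P.parts) :
    (glueSome hx P B hB).parts = insert (insert x B) (P.parts.erase B) := rfl

end EDPAux

namespace EDPAux2

open EDPAux

variable {α : Type*} [DecidableEq α] {s : Finset α} {x : α}

lemma not_mem_of_part {P : Finpartition s} {B : Finset α} (hx : x ∉ s) (hB : B ∈ P.parts) :
    x ∉ B := fun h => hx (P.le hB h)

/-- Glue an optional block choice onto a partition of `s` to get a partition of `insert x s`. -/
def glue (hx : x ∉ s) (p : Σ P : Finpartition s, Option {B // B ∈ P.parts}) :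
    Finpartition (insert x s) :=
  match p with
  | ⟨P, none⟩ => P.extend (b := {x}) (by simp)
      (by simp [Finset.disjoint_singleton_right, hx])
      (by rw [Finset.sup_eq_union, Finset.union_comm, ← Finset.insert_eq])
  | ⟨P, some ⟨B, hB⟩⟩ => glueSome hx P B hB

lemma glue_none_parts (hx : x ∉ s) (P : Finpartition s) :
    (glue hx ⟨P, none⟩).parts = insert {x} P.parts := rfl

lemma glue_some_parts (hx : x ∉ s) (P : Finpartition s) (B : Finset α) (hB : B ∈ P.parts) :
    (glue hx ⟨P, some ⟨B, hB⟩⟩).parts = insert (insert x B) (P.parts.erase B) := rfl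

lemma insert_sdiff (hx : x ∉ s) : insert x s \ {x} = s := by
  rw [Finset.sdiff_singleton_eq_erase, Finset.erase_insert hx]

/-- Remove `x` from a partition of `insert x s`. -/
def down (hx : x ∉ s) (Q : Finpartition (insert x s)) : Finpartition s :=
  (Q.avoid {x}).copy (insert_sdiff hx)

lemma mem_down (hx : x ∉ s) (Q : Finpartition (insert x s)) (C : Finset α) :
    C ∈ (down hx Q).parts ↔ ∃ d ∈ Q.parts, ¬ d ⊆ {x} ∧ d \ {x} = C := by
  rw [down, Finpartition.copy_parts, Finpartition.mem_avoid]

lemma down_glue (hx : x ∉ s) (p : Σ P : Finpartition s, Option {B // B ∈ P.parts}) :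
    down hx (glue hx p) = p.1 := by
  obtain ⟨P, o⟩ := p
  apply Finpartition.ext
  ext C
  rw [mem_down]
  match o with
  | none =>
      simp only [glue_none_parts, Finset.mem_insert]
      constructor
      · rintro ⟨d, hd | hd, hsub, rfl⟩
        · exact absurd (hd ▸ Finset.Subset.refl _) hsub
        · rwa [Finset.sdiff_singleton_eq_erase,
            Finset.erase_eq_of_notMem (not_mem_of_part hx hd)]
      · intro hC
        refine ⟨C, Or.inr hC, ?_, ?_⟩
        · intro hsub
          obtain ⟨y, hy⟩ := P.nonempty_of_mem_parts hC
          have := hsub hy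
          simp only [Finset.mem_singleton] at this
          exact not_mem_of_part hx hC (this ▸ hy)
        · rw [Finset.sdiff_singleton_eq_erase,
            Finset.erase_eq_of_notMem (not_mem_of_part hx hC)]
  | some ⟨B, hB⟩ =>
      simp only [glue_some_parts, Finset.mem_insert, Finset.mem_erase]
      have hxB : x ∉ B := not_mem_of_part hx hB
      constructor
      · rintro ⟨d, hd | ⟨hd1, hd2⟩, hsub, rfl⟩
        · rw [hd, Finset.sdiff_singleton_eq_erase, Finset.erase_insert hxB]
          exact hB
        · rwa [Finset.sdiff_singleton_eq_erase,
            Finset.erase_eq_of_notMem (not_mem_of_part hx hd2)]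
      · intro hC
        by_cases hCB : C = B
        · refine ⟨insert x B, Or.inl rfl, ?_, ?_⟩
          · intro hsub
            obtain ⟨y, hy⟩ := P.nonempty_of_mem_parts hB
            have := hsub (Finset.mem_insert_of_mem hy)
            simp only [Finset.mem_singleton] at this
            exact hxB (this ▸ hy)
          · rw [Finset.sdiff_singleton_eq_erase, Finset.erase_insert hxB, hCB]
        · refine ⟨C, Or.inr ⟨hCB, hC⟩, ?_, ?_⟩
          · intro hsub
            obtain ⟨y, hy⟩ := P.nonempty_of_mem_parts hC
            have := hsub hy
            simp only [Finset.mem_singleton] at this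
            exact not_mem_of_part hx hC (this ▸ hy)
          · rw [Finset.sdiff_singleton_eq_erase,
              Finset.erase_eq_of_notMem (not_mem_of_part hx hC)]

lemma glue_injective (hx : x ∉ s) : Function.Injective (glue hx) := by
  intro p q h
  have h1 : p.1 = q.1 := by rw [← down_glue hx p, ← down_glue hx q, h]
  obtain ⟨P, o⟩ := p
  obtain ⟨P', o'⟩ := q
  dsimp at h1
  subst h1
  have hparts : (glue hx ⟨P, o⟩).parts = (glue hx ⟨P, o'⟩).parts := by rw [h]
  suffices ho : o = o' by rw [ho]
  match o, o' with
  | none, none => rfl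
  | none, some ⟨B, hB⟩ =>
      exfalso
      rw [glue_none_parts, glue_some_parts] at hparts
      have hmem : ({x} : Finset α) ∈ insert (insert x B) (P.parts.erase B) := by
        rw [← hparts]; exact Finset.mem_insert_self _ _
      rcases Finset.mem_insert.mp hmem with h' | h'
      · obtain ⟨y, hy⟩ := P.nonempty_of_mem_parts hB
        have : y ∈ ({x} : Finset α) := h' ▸ Finset.mem_insert_of_mem hy
        simp only [Finset.mem_singleton] at this
        exact not_mem_of_part hx hB (this ▸ hy)
      · exact hx (P.le (Finset.mem_of_mem_erase h') (Finset.mem_singleton_self x))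
  | some ⟨B, hB⟩, none =>
      exfalso
      rw [glue_none_parts, glue_some_parts] at hparts
      have hmem : ({x} : Finset α) ∈ insert (insert x B) (P.parts.erase B) := by
        rw [hparts]; exact Finset.mem_insert_self _ _
      rcases Finset.mem_insert.mp hmem with h' | h'
      · obtain ⟨y, hy⟩ := P.nonempty_of_mem_parts hB
        have : y ∈ ({x} : Finset α) := h' ▸ Finset.mem_insert_of_mem hy
        simp only [Finset.mem_singleton] at this
        exact not_mem_of_part hx hB (this ▸ hy)
      · exact hx (P.le (Finset.mem_of_mem_erase h') (Finset.mem_singleton_self x))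
  | some ⟨B, hB⟩, some ⟨B', hB'⟩ =>
      rw [glue_some_parts, glue_some_parts] at hparts
      have hmem : insert x B ∈ insert (insert x B') (P.parts.erase B') := by
        rw [← hparts]; exact Finset.mem_insert_self _ _
      rcases Finset.mem_insert.mp hmem with h' | h'
      · have : B = B' := by
          have e := congrArg (fun t => Finset.erase t x) h'
          simpa [Finset.erase_insert (not_mem_of_part hx hB),
            Finset.erase_insert (not_mem_of_part hx hB')] using e
        subst this; rfl
      · exact absurd (P.le (Finset.mem_of_mem_erase h') (Finset.mem_insert_self x B)) hx

lemma glue_surjective (hx : x ∉ s) : Function.Surjective (glue hx) := by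
  intro Q
  have hxmem : x ∈ insert x s := Finset.mem_insert_self x s
  set T := Q.part x with hT
  have hTmem : T ∈ Q.parts := Q.part_mem.mpr hxmem
  have hxT : x ∈ T := Q.mem_part hxmem
  by_cases hTx : T = {x}
  · refine ⟨⟨down hx Q, none⟩, ?_⟩
    apply Finpartition.ext
    rw [glue_none_parts]
    ext C
    rw [Finset.mem_insert, mem_down]
    constructor
    · rintro (rfl | ⟨d, hd, hsub, rfl⟩)
      · exact hTx ▸ hTmem
      · have hxd : x ∉ d := by
          intro hxd
          exact hsub (Q.part_eq_of_mem hd hxd ▸ hTx ▸ Finset.Subset.refl _)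
        rwa [Finset.sdiff_singleton_eq_erase, Finset.erase_eq_of_notMem hxd]
    · intro hC
      by_cases hxC : x ∈ C
      · left; rw [← hTx]; exact (Q.part_eq_of_mem hC hxC).symm
      · right
        refine ⟨C, hC, ?_, ?_⟩
        · intro hsub
          obtain ⟨y, hy⟩ := Q.nonempty_of_mem_parts hC
          have := hsub hy
          simp only [Finset.mem_singleton] at this
          exact hxC (this ▸ hy)
        · rw [Finset.sdiff_singleton_eq_erase, Finset.erase_eq_of_notMem hxC]
  · have hBmem : T.erase x ∈ (down hx Q).parts := by
      rw [mem_down]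
      refine ⟨T, hTmem, ?_, Finset.sdiff_singleton_eq_erase x T⟩
      intro hsub
      exact hTx (Finset.Subset.antisymm hsub (Finset.singleton_subset_iff.mpr hxT))
    refine ⟨⟨down hx Q, some ⟨T.erase x, hBmem⟩⟩, ?_⟩
    apply Finpartition.ext
    rw [glue_some_parts, Finset.insert_erase hxT]
    ext C
    rw [Finset.mem_insert, Finset.mem_erase, mem_down]
    constructor
    · rintro (rfl | ⟨hne, d, hd, hsub, rfl⟩)
      · exact hTmem
      · have hxd : x ∉ d := by
          intro hxd
          exact hne (by rw [hT, Q.part_eq_of_mem hd hxd, Finset.sdiff_singleton_eq_erase])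
        rwa [Finset.sdiff_singleton_eq_erase, Finset.erase_eq_of_notMem hxd]
    · intro hC
      by_cases hCT : C = T
      · exact Or.inl hCT
      · have hxC : x ∉ C := fun h =>
          hCT ((Q.part_eq_of_mem hC h).symm.trans hT.symm)
        refine Or.inr ⟨?_, C, hC, ?_, ?_⟩
        · intro h
          obtain ⟨y, hy⟩ : (T.erase x).Nonempty := by
            rw [Finset.nonempty_iff_ne_empty]
            intro h0
            rcases (Finset.erase_eq_empty_iff T x).mp h0 with h1 | h1
            · exact (Q.nonempty_of_mem_parts hTmem).ne_empty h1
            · exact hTx h1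
          have hyC : y ∈ C := h ▸ hy
          have hyT : y ∈ T := Finset.mem_of_mem_erase hy
          exact hCT (Q.eq_of_mem_parts hC hTmem hyC hyT)
        · intro hsub
          obtain ⟨y, hy⟩ := Q.nonempty_of_mem_parts hC
          have := hsub hy
          simp only [Finset.mem_singleton] at this
          exact hxC (this ▸ hy)
        · rw [Finset.sdiff_singleton_eq_erase, Finset.erase_eq_of_notMem hxC]

lemma glue_bijective (hx : x ∉ s) : Function.Bijective (glue hx) :=
  ⟨glue_injective hx, glue_surjective hx⟩

end EDPAux2

namespace EDPAux3

open EDPAux EDPAux2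

variable {α : Type*} [DecidableEq α] {s : Finset α} {x : α}

noncomputable def w (x : ℝ) {s : Finset α} (P : Finpartition s) : ℝ :=
  x ^ P.parts.card * ∏ B ∈ P.parts, ((B.card - 1).factorial : ℝ)

lemma w_glue_none (y : ℝ) (hx : x ∉ s) (P : Finpartition s) :
    w y (glue hx ⟨P, none⟩) = y * w y P := by
  have hnm : ({x} : Finset α) ∉ P.parts := fun h =>
    hx (Finset.singleton_subset_iff.mp (P.le h))
  rw [w, glue_none_parts, Finset.card_insert_of_notMem hnm, Finset.prod_insert hnm]
  simp only [Finset.card_singleton, w]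
  norm_num
  ring

lemma w_glue_some (y : ℝ) (hx : x ∉ s) (P : Finpartition s) (B : Finset α) (hB : B ∈ P.parts) :
    w y (glue hx ⟨P, some ⟨B, hB⟩⟩) = (B.card : ℝ) * w y P := by
  have hxB : x ∉ B := not_mem_of_part hx hB
  have hnm : insert x B ∉ P.parts.erase B := fun h =>
    hx (P.le (Finset.mem_of_mem_erase h) (Finset.mem_insert_self x B))
  have hBpos : 0 < B.card := Finset.card_pos.mpr (P.nonempty_of_mem_parts hB)
  rw [w, glue_some_parts, Finset.card_insert_of_notMem hnm, Finset.prod_insert hnm,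
    Finset.card_erase_of_mem hB,
    Nat.sub_add_cancel (Nat.one_le_iff_ne_zero.mpr (Finset.card_ne_zero_of_mem hB)),
    Finset.card_insert_of_notMem hxB]
  have hprod : ∏ C ∈ P.parts, ((C.card - 1).factorial : ℝ)
      = ((B.card - 1).factorial : ℝ) * ∏ C ∈ P.parts.erase B, ((C.card - 1).factorial : ℝ) := by
    exact (Finset.mul_prod_erase P.parts _ hB).symm
  have hfac : ((B.card + 1 - 1).factorial : ℝ)
      = (B.card : ℝ) * ((B.card - 1).factorial : ℝ) := by
    rw [Nat.add_sub_cancel, ← Nat.mul_factorial_pred hBpos.ne']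
    push_cast
    ring
  rw [w, hprod, hfac]
  ring

lemma crt (y : ℝ) (s : Finset α) :
    ∑ P : Finpartition s, y ^ P.parts.card * ∏ B ∈ P.parts, ((B.card - 1).factorial : ℝ)
      = ∏ i ∈ Finset.range s.card, (y + i) := by
  induction s using Finset.induction_on with
  | empty =>
      haveI : Unique (Finpartition (∅ : Finset α)) :=
        Finset.bot_eq_empty (α := α) ▸ inferInstance
      rw [Fintype.sum_unique]
      have h : (default : Finpartition (∅ : Finset α)).parts = ∅ := by
        rw [Finset.eq_empty_iff_forall_notMem]
        intro B hB
        exact (Finpartition.nonempty_of_mem_parts _ hB).ne_empty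
          (Finset.subset_empty.mp (Finpartition.le _ hB))
      simp [h]
  | @insert x s hx ih =>
      have hbij := Fintype.sum_bijective (glue hx) (glue_bijective hx)
        (fun p => w y (glue hx p)) (fun Q => w y Q) (fun p => rfl)
      have hw : ∀ Q : Finpartition (insert x s),
          y ^ Q.parts.card * ∏ B ∈ Q.parts, ((B.card - 1).factorial : ℝ) = w y Q :=
        fun Q => rfl
      simp only [hw]
      rw [← hbij, ← Finset.univ_sigma_univ, Finset.sum_sigma]
      have hstep : ∀ P : Finpartition s,
          ∑ o : Option {B // B ∈ P.parts}, w y (glue hx ⟨P, o⟩)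
            = (y + s.card) * w y P := by
        intro P
        rw [Fintype.sum_option, w_glue_none]
        have h2 : ∀ b : {B // B ∈ P.parts},
            w y (glue hx ⟨P, some b⟩) = ((b : Finset α).card : ℝ) * w y P := by
          rintro ⟨B, hB⟩
          exact w_glue_some y hx P B hB
        simp only [h2]
        rw [Finset.sum_coe_sort P.parts (fun B => (B.card : ℝ) * w y P),
          ← Finset.sum_mul]
        have : ∑ B ∈ P.parts, (B.card : ℝ) = (s.card : ℝ) := by
          exact_mod_cast congrArg (Nat.cast : ℕ → ℝ) P.sum_card_parts
        rw [this]
        ring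
      simp only [hstep]
      rw [← Finset.mul_sum]
      have ih' : ∑ P : Finpartition s, w y P = ∏ i ∈ Finset.range s.card, (y + i) := ih
      rw [ih', Finset.card_insert_of_notMem hx, Finset.prod_range_succ]
      ring

end EDPAux3


/-- **Normalization of the enriched-Dirichlet-process nested partition law
(Proposition 1).**  For all reals `a > 0`, `b > 0` and every finite set `s` with `n`
elements,
`∑_{P partition of s} a^{#P} ∏_{B ∈ P} [ (|B|−1)! · (∏_{i<|B|}(b+i))⁻¹ ·
∑_{Q partition of B} b^{#Q} ∏_{C ∈ Q} (|C|−1)! ] = ∏_{i<n} (a+i)`.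
Equivalently, the nested random-partition prior induced by the enriched Dirichlet
process with upper-level concentration `a` and constant lower-level concentration `b`
sums to `1` over all nested partitions of `n` items. -/
theorem edp_nested_partition_normalization
    {α : Type*} [DecidableEq α]
    (a b : ℝ) (ha : 0 < a) (hb : 0 < b)
    (s : Finset α) (n : ℕ) (hn : s.card = n) :
    ∑ P : Finpartition s,
        a ^ P.parts.card *
          ∏ B ∈ P.parts,
            (((B.card - 1).factorial : ℝ) *
              (∏ i ∈ Finset.range B.card, (b + i))⁻¹ *
              ∑ Q : Finpartition B,
                b ^ Q.parts.card * ∏ C ∈ Q.parts, ((C.card - 1).factorial : ℝ)) =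
      ∏ i ∈ Finset.range n, (a + i) := by
  subst hn
  have hB : ∀ B : Finset α,
      (((B.card - 1).factorial : ℝ) *
          (∏ i ∈ Finset.range B.card, (b + i))⁻¹ *
          ∑ Q : Finpartition B,
            b ^ Q.parts.card * ∏ C ∈ Q.parts, ((C.card - 1).factorial : ℝ))
        = ((B.card - 1).factorial : ℝ) := by
    intro B
    rw [EDPAux3.crt b B]
    have hpos : (0 : ℝ) < ∏ i ∈ Finset.range B.card, (b + i) :=
      Finset.prod_pos fun i _ => by positivity
    field_simp
  simp only [hB]
  exact EDPAux3.crt a s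
end

section
/- Almost-sure validity of random stick-breaking weights: if (v_k)_{k∈ℕ} are independent, identically distributed [0,1]-valued random variables with μ({v₀ > 0}) > 0, then for μ-almost every ω the stick-breaking weights sum to 1, i.e., HasSum (fun k => w k (ω)) 1. (This underlies the square-breaking representation of the enriched dependent Dirichlet process in the paper, where v_k^φ are i.i.d. Beta(1, α_φ) random variables, so that the random weights w_k^φ = v_k^φ ∏_{l<k}(1 − v_l^φ) almost surely form a probability vector.) -/
open MeasureTheory ProbabilityTheory Filter
open scoped ENNReal

/-- Partial sums of stick-breaking weights telescope. -/
lemma stick_breaking_partial_sum (v : ℕ → ℝ) (n : ℕ) :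
    ∑ k ∈ Finset.range n, v k * ∏ l ∈ Finset.range k, (1 - v l)
      = 1 - ∏ l ∈ Finset.range n, (1 - v l) := by
  induction n with
  | zero => simp
  | succ n ih =>
    rw [Finset.sum_range_succ, Finset.prod_range_succ, ih]
    ring

/-- **Almost-sure validity of random stick-breaking weights.**  If `(v k)` are
independent, identically distributed `[0,1]`-valued random variables with
`μ(v₀ > 0) > 0`, then for `μ`-almost every `ω` the stick-breaking weights
`w k ω = v k ω · ∏_{l < k} (1 − v l ω)` sum to `1`.  This underlies the
square-breaking representation of the enriched dependent Dirichlet process, where the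
`v_k^φ` are i.i.d. `Beta(1, α_φ)` random variables, so that the random weights
almost surely form a probability vector. -/
theorem stick_breaking_random_weights_hasSum
    {Ω : Type*} [MeasurableSpace Ω]
    (μ : Measure Ω) [IsProbabilityMeasure μ]
    (v : ℕ → Ω → ℝ)
    (hmeas : ∀ k, Measurable (v k))
    (hv0 : ∀ k ω, 0 ≤ v k ω) (hv1 : ∀ k ω, v k ω ≤ 1)
    (hindep : iIndepFun v μ)
    (hident : ∀ k, Measure.map (v k) μ = Measure.map (v 0) μ)
    (hpos : 0 < μ {ω | 0 < v 0 ω}) :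
    ∀ᵐ ω ∂μ, HasSum (fun k => v k ω * ∏ l ∈ Finset.range k, (1 - v l ω)) 1 := by
  -- Choose ε = 1/(N+1) with μ(v₀ ≥ ε) > 0.
  obtain ⟨N, hN⟩ : ∃ N : ℕ, 0 < μ {ω | 1 / ((N : ℝ) + 1) ≤ v 0 ω} := by
    by_contra h
    push_neg at h
    simp only [nonpos_iff_eq_zero] at h
    have hsub : {ω | 0 < v 0 ω} ⊆ ⋃ N : ℕ, {ω | 1 / ((N : ℝ) + 1) ≤ v 0 ω} := by
      intro ω hω
      simp only [Set.mem_setOf_eq] at hω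
      obtain ⟨n, hn⟩ := exists_nat_one_div_lt hω
      exact Set.mem_iUnion.2 ⟨n, hn.le⟩
    have hle : μ {ω | 0 < v 0 ω} ≤ μ (⋃ N : ℕ, {ω | 1 / ((N : ℝ) + 1) ≤ v 0 ω}) :=
      measure_mono hsub
    rw [measure_iUnion_null h] at hle
    exact absurd (le_antisymm hle zero_le) hpos.ne'
  set ε : ℝ := 1 / ((N : ℝ) + 1) with hε_def
  have hε_pos : 0 < ε := by positivity
  have hε_le : ε ≤ 1 := by
    rw [hε_def, div_le_one (by positivity)]
    linarith [Nat.cast_nonneg (α := ℝ) N]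
  -- The independent events
  set s : ℕ → Set Ω := fun k => v k ⁻¹' Set.Ici ε with hs_def
  have hsm : ∀ k, MeasurableSet (s k) := fun k => (hmeas k) measurableSet_Ici
  have hs_indep : iIndepSet s μ := by
    rw [iIndepSet_iff_meas_biInter hsm]
    intro S
    exact hindep.measure_inter_preimage_eq_mul S (fun i _ => measurableSet_Ici)
  have hs_meas_eq : ∀ k, μ (s k) = μ (s 0) := by
    intro k
    have h1 : μ (s k) = (μ.map (v k)) (Set.Ici ε) :=
      (Measure.map_apply (hmeas k) measurableSet_Ici).symm
    have h2 : μ (s 0) = (μ.map (v 0)) (Set.Ici ε) :=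
      (Measure.map_apply (hmeas 0) measurableSet_Ici).symm
    rw [h1, h2, hident k]
  have hs0_pos : 0 < μ (s 0) := by
    refine lt_of_lt_of_le hN (measure_mono ?_)
    intro ω hω
    exact hω
  -- second Borel–Cantelli
  have htsum : (∑' k, μ (s k)) = ⊤ := by
    have : (fun k => μ (s k)) = fun _ => μ (s 0) := funext hs_meas_eq
    rw [this]
    exact ENNReal.tsum_const_eq_top_of_ne_zero hs0_pos.ne'
  have hBC : μ (limsup s atTop) = 1 :=
    measure_limsup_eq_one hsm hs_indep htsum
  have hae : ∀ᵐ ω ∂μ, ω ∈ limsup s atTop := by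
    have hm : MeasurableSet (limsup s atTop) :=
      MeasurableSet.measurableSet_limsup (fun n => hsm n)
    rw [ae_iff]
    have heq : {ω | ¬ ω ∈ limsup s atTop} = (limsup s atTop)ᶜ := rfl
    rw [heq, measure_compl hm (measure_ne_top μ _), hBC, measure_univ, tsub_self]
  filter_upwards [hae] with ω hω
  -- ω belongs to infinitely many s k
  have hfreq : {k | ω ∈ s k}.Infinite := by
    rw [← Nat.frequently_atTop_iff_infinite]
    exact mem_limsup_iff_frequently_mem.mp hω
  -- The tail product tends to zero
  have hP_nonneg : ∀ n, 0 ≤ ∏ l ∈ Finset.range n, (1 - v l ω) :=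
    fun n => Finset.prod_nonneg fun l _ => by linarith [hv1 l ω]
  have hP_anti : Antitone (fun n => ∏ l ∈ Finset.range n, (1 - v l ω)) := by
    apply antitone_nat_of_succ_le
    intro n
    rw [Finset.prod_range_succ]
    have h1 : 1 - v n ω ≤ 1 := by linarith [hv0 n ω]
    calc (∏ l ∈ Finset.range n, (1 - v l ω)) * (1 - v n ω)
        ≤ (∏ l ∈ Finset.range n, (1 - v l ω)) * 1 := by
          apply mul_le_mul_of_nonneg_left h1 (hP_nonneg n)
      _ = _ := mul_one _
  have hP_tendsto : Tendsto (fun n => ∏ l ∈ Finset.range n, (1 - v l ω)) atTop (nhds 0) := by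
    rw [Metric.tendsto_atTop]
    intro δ hδ
    -- choose m with (1-ε)^m < δ
    have h1ε : |1 - ε| < 1 := by
      rw [abs_lt]; constructor <;> linarith
    obtain ⟨m, hm⟩ := (tendsto_pow_atTop_nhds_zero_of_abs_lt_one h1ε).eventually
      (gt_mem_nhds hδ) |>.exists
    -- choose a finite subset T of size m of the infinite occurrence set
    obtain ⟨T, hT_sub, hT_card⟩ := hfreq.exists_subset_card_eq m
    -- the product over range n for large n is ≤ (1-ε)^m
    obtain ⟨n₀, hn₀⟩ := T.exists_nat_subset_range
    refine ⟨n₀, fun n hn => ?_⟩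
    have hT_range : T ⊆ Finset.range n :=
      hn₀.trans (Finset.range_subset_range.mpr hn)
    have key : ∏ l ∈ Finset.range n, (1 - v l ω) ≤ (1 - ε) ^ m := by
      have hsplit : ∏ l ∈ Finset.range n, (1 - v l ω)
          = (∏ l ∈ Finset.range n \ T, (1 - v l ω)) * ∏ l ∈ T, (1 - v l ω) :=
        (Finset.prod_sdiff hT_range).symm
      have h1 : ∏ l ∈ Finset.range n \ T, (1 - v l ω) ≤ 1 :=
        Finset.prod_le_one (fun l _ => by linarith [hv1 l ω]) (fun l _ => by linarith [hv0 l ω])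
      have h2 : ∏ l ∈ T, (1 - v l ω) ≤ (1 - ε) ^ m := by
        calc ∏ l ∈ T, (1 - v l ω) ≤ ∏ l ∈ T, (1 - ε) := by
              apply Finset.prod_le_prod (fun l _ => by linarith [hv1 l ω])
              intro l hl
              have : ε ≤ v l ω := hT_sub hl
              linarith
          _ = (1 - ε) ^ T.card := by rw [Finset.prod_const]
          _ = (1 - ε) ^ m := by rw [hT_card]
      have h2' : 0 ≤ ∏ l ∈ T, (1 - v l ω) :=
        Finset.prod_nonneg (fun l _ => by linarith [hv1 l ω])
      calc ∏ l ∈ Finset.range n, (1 - v l ω)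
          = (∏ l ∈ Finset.range n \ T, (1 - v l ω)) * ∏ l ∈ T, (1 - v l ω) := hsplit
        _ ≤ 1 * ∏ l ∈ T, (1 - v l ω) := by
            apply mul_le_mul_of_nonneg_right h1 h2'
        _ = ∏ l ∈ T, (1 - v l ω) := one_mul _
        _ ≤ (1 - ε) ^ m := h2
    rw [Real.dist_eq, sub_zero, abs_of_nonneg (hP_nonneg n)]
    exact lt_of_le_of_lt key hm
  -- conclude HasSum
  rw [hasSum_iff_tendsto_nat_of_nonneg
    (fun k => mul_nonneg (hv0 k ω) (hP_nonneg k))]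
  have : (fun n => ∑ k ∈ Finset.range n, v k ω * ∏ l ∈ Finset.range k, (1 - v l ω))
      = fun n => 1 - ∏ l ∈ Finset.range n, (1 - v l ω) := by
    funext n
    exact stick_breaking_partial_sum (fun k => v k ω) n
  rw [this]
  have := (tendsto_const_nhds (x := (1:ℝ)) (f := atTop)).sub hP_tendsto
  simpa using this
end
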